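/- For every real number m ≥ 0, the function 𝔣_m restricted to the interval [m, ∞) is a bijection onto [0, ∞) (Set.BijOn 𝔣_m (Set.Ici m) (Set.Ici 0)). In particular, for every real n ≥ 0 there is a unique F ≥ m with 𝔣_m(F) = n. (Section 7: 𝔣_m(m) = 0, 𝔣_m is strictly increasing and tends to ∞, giving the unique solvability of the EBK equation √(F²−m²) − m·arccos(m/F) = nπ for the disk billiard.) -/

import Mathlib

open Real Set

/-- The function `𝔣_m(x) = √(x² − m²) − m·arccos(m/x)` from Section 7. -/
noncomputable def frakf (m : ℝ) (x : ℝ) : ℝ :=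
  Real.sqrt (x ^ 2 - m ^ 2) - m * Real.arccos (m / x)

lemma frakf_hasDerivAt {m x : ℝ} (hm : 0 ≤ m) (hx : m < x) :
    HasDerivAt (frakf m) (Real.sqrt (x ^ 2 - m ^ 2) / x) x := by
  have hx0 : 0 < x := lt_of_le_of_lt hm hx
  have hsub : 0 < x ^ 2 - m ^ 2 := by nlinarith
  have hs : 0 < Real.sqrt (x ^ 2 - m ^ 2) := Real.sqrt_pos.2 hsub
  have h1 : HasDerivAt (fun y : ℝ => y ^ 2 - m ^ 2) (2 * x) x := by
    simpa using ((hasDerivAt_pow 2 x).sub_const (m ^ 2))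
  have hsqrt : HasDerivAt (fun y : ℝ => Real.sqrt (y ^ 2 - m ^ 2))
      ((2 * x) / (2 * Real.sqrt (x ^ 2 - m ^ 2))) x := h1.sqrt (ne_of_gt hsub)
  have hdiv : HasDerivAt (fun y : ℝ => m / y) (-m / x ^ 2) x := by
    have := (hasDerivAt_inv (ne_of_gt hx0)).const_mul m
    have e1 : (fun y : ℝ => m / y) = fun y => m * y⁻¹ := by funext y; ring
    have e2 : -m / x ^ 2 = m * -(x ^ 2)⁻¹ := by ring
    rw [e1, e2]; exact this
  have hlt : m / x < 1 := (div_lt_one hx0).2 hx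
  have hge : 0 ≤ m / x := div_nonneg hm hx0.le
  have harc : HasDerivAt (fun y : ℝ => Real.arccos (m / y))
      (-(1 / Real.sqrt (1 - (m / x) ^ 2)) * (-m / x ^ 2)) x := by
    exact (Real.hasDerivAt_arccos (by linarith) (ne_of_lt hlt)).comp x hdiv
  have key : HasDerivAt (frakf m)
      ((2 * x) / (2 * Real.sqrt (x ^ 2 - m ^ 2)) -
        m * (-(1 / Real.sqrt (1 - (m / x) ^ 2)) * (-m / x ^ 2))) x :=
    hsqrt.sub (harc.const_mul m)
  convert key using 1
  have h2 : Real.sqrt (1 - (m / x) ^ 2) = Real.sqrt (x ^ 2 - m ^ 2) / x := by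
    have he : 1 - (m / x) ^ 2 = (x ^ 2 - m ^ 2) / x ^ 2 := by field_simp
    rw [he, Real.sqrt_div hsub.le, Real.sqrt_sq hx0.le]
  rw [h2]
  have hsq : Real.sqrt (x ^ 2 - m ^ 2) ^ 2 = x ^ 2 - m ^ 2 := Real.sq_sqrt hsub.le
  field_simp
  linear_combination hsq

lemma frakf_continuousOn {m : ℝ} (hm : 0 ≤ m) : ContinuousOn (frakf m) (Ici m) := by
  rcases hm.eq_or_lt with h0 | h0
  · subst h0
    have : EqOn (frakf 0) (fun x => Real.sqrt (x ^ 2)) (Ici (0:ℝ)) := by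
      intro x _; simp [frakf]
    exact (Continuous.continuousOn (by continuity)).congr this
  · apply ContinuousOn.sub
    · exact (Real.continuous_sqrt.comp (by continuity)).continuousOn
    · apply ContinuousOn.mul continuousOn_const
      apply Real.continuous_arccos.comp_continuousOn
      exact continuousOn_const.div continuousOn_id
        (fun x hx => ne_of_gt (lt_of_lt_of_le h0 hx))

lemma frakf_strictMonoOn {m : ℝ} (hm : 0 ≤ m) : StrictMonoOn (frakf m) (Ici m) := by
  apply strictMonoOn_of_deriv_pos (convex_Ici m) (frakf_continuousOn hm)
  intro x hx
  rw [interior_Ici] at hx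
  have hx' : m < x := hx
  rw [(frakf_hasDerivAt hm hx').deriv]
  have hx0 : 0 < x := lt_of_le_of_lt hm hx'
  have hsub : 0 < x ^ 2 - m ^ 2 := by nlinarith [hx', hm]
  positivity

lemma frakf_self {m : ℝ} (hm : 0 ≤ m) : frakf m m = 0 := by
  rcases hm.eq_or_lt with h0 | h0
  · subst h0; simp [frakf]
  · simp [frakf, div_self (ne_of_gt h0), Real.arccos_one]

lemma frakf_exists {m : ℝ} (hm : 0 ≤ m) {n : ℝ} (hn : 0 ≤ n) :
    ∃ F, m ≤ F ∧ frakf m F = n := by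
  set b := m + n + m * Real.pi with hb
  have hpi : 0 < Real.pi := Real.pi_pos
  have hmb : m ≤ b := by nlinarith
  have hfb : n ≤ frakf m b := by
    have harc : Real.arccos (m / b) ≤ Real.pi := Real.arccos_le_pi _
    have harc0 : 0 ≤ Real.arccos (m / b) := Real.arccos_nonneg _
    have hbsq : (n + m * Real.pi) ^ 2 ≤ b ^ 2 - m ^ 2 := by nlinarith
    have hsqrt : n + m * Real.pi ≤ Real.sqrt (b ^ 2 - m ^ 2) := by
      rw [show n + m * Real.pi = Real.sqrt ((n + m * Real.pi) ^ 2) from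
        (Real.sqrt_sq (by positivity)).symm]
      exact Real.sqrt_le_sqrt hbsq
    have : m * Real.arccos (m / b) ≤ m * Real.pi :=
      mul_le_mul_of_nonneg_left harc hm
    simp only [frakf]
    linarith
  have := intermediate_value_Icc hmb ((frakf_continuousOn hm).mono Icc_subset_Ici_self)
  have hmem : n ∈ Icc (frakf m m) (frakf m b) := by
    rw [frakf_self hm]; exact ⟨hn, hfb⟩
  obtain ⟨F, hF, hFeq⟩ := this hmem
  exact ⟨F, hF.1, hFeq⟩

/-- **Section 7.** For every `m ≥ 0`, the function `𝔣_m` is a bijection from `[m, ∞)`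
onto `[0, ∞)`; in particular, for every `n ≥ 0` the EBK equation `𝔣_m(F) = n` has a
unique solution `F ≥ m`. -/
theorem frakf_bijOn (m : ℝ) (hm : 0 ≤ m) :
    Set.BijOn (frakf m) (Set.Ici m) (Set.Ici (0 : ℝ)) ∧
    ∀ n : ℝ, 0 ≤ n → ∃! F : ℝ, m ≤ F ∧ frakf m F = n := by
  have hmono := frakf_strictMonoOn hm
  constructor
  · refine ⟨?_, hmono.injOn, ?_⟩
    · intro x hx
      have : frakf m m ≤ frakf m x :=
        hmono.monotoneOn self_mem_Ici hx hx
      rw [frakf_self hm] at this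
      exact this
    · intro n hn
      obtain ⟨F, hF, hFeq⟩ := frakf_exists hm hn
      exact ⟨F, hF, hFeq⟩
  · intro n hn
    obtain ⟨F, hF, hFeq⟩ := frakf_exists hm hn
    refine ⟨F, ⟨hF, hFeq⟩, ?_⟩
    rintro G ⟨hG, hGeq⟩
    exact hmono.injOn hG hF (by rw [hFeq, hGeq])
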